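/- There exist d₀ > 0 and a constant κ' < ∞ such that the following holds for every real β > 1/2 and every 0 < d < d₀: if p is a probability mass function on the positive integers with finite mean μ and Shannon entropy H(p) ≥ (1 − d^β)·μ, then ∑_{l≥1} |p(l) − 2^{−l}| ≤ κ'·d^{β/2}. -/

import Mathlib

open Real

lemma pnat_summable_iff (f : ℕ+ → ℝ) :
    Summable f ↔ Summable (fun n : ℕ => f n.succPNat) := by
  rw [← Equiv.pnatEquivNat.symm.summable_iff]
  constructor <;> intro h <;> (apply h.congr; intro n; simp [Equiv.pnatEquivNat, Function.comp])

lemma pnat_tsum_eq (f : ℕ+ → ℝ) :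
    ∑' l : ℕ+, f l = ∑' n : ℕ, f n.succPNat := by
  rw [← Equiv.pnatEquivNat.symm.tsum_eq f]
  apply tsum_congr; intro n; simp [Equiv.pnatEquivNat]

-- log key: 1 - 1/s ≤ log s
lemma one_sub_inv_le_log {s : ℝ} (hs : 0 < s) : 1 - 1/s ≤ Real.log s := by
  have h := Real.log_le_sub_one_of_pos (x := 1/s) (by positivity)
  rw [Real.log_div one_ne_zero (ne_of_gt hs)] at h
  rw [one_div]
  simp at h; linarith

-- Gibbs pointwise
lemma gibbs_pw {x g : ℝ} (hx : 0 ≤ x) (hg : 0 < g) :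
    -(x * Real.log x) ≤ -(x * Real.log g) + g - x := by
  rcases eq_or_lt_of_le hx with h | h
  · simp [← h]; positivity
  · have h1 := Real.log_le_sub_one_of_pos (x := g/x) (by positivity)
    rw [Real.log_div (ne_of_gt hg) (ne_of_gt h)] at h1
    have : x * (Real.log g - Real.log x) ≤ x * (g/x - 1) := by
      exact mul_le_mul_of_nonneg_left h1 hx
    have h2 : x * (g/x - 1) = g - x := by field_simp
    rw [h2] at this
    linarith [mul_sub x (Real.log g) (Real.log x)]

-- Hellinger pointwise
lemma hellinger_pw {x y : ℝ} (hx : 0 ≤ x) (hy : 0 < y) :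
    (Real.sqrt x - Real.sqrt y)^2 ≤ x * Real.log x - x * Real.log y - x + y := by
  rcases eq_or_lt_of_le hx with h | h
  · simp [← h, Real.sq_sqrt hy.le]
  · have hsx : (0:ℝ) < Real.sqrt x := Real.sqrt_pos.2 h
    have hsy : (0:ℝ) < Real.sqrt y := Real.sqrt_pos.2 hy
    have key : 1 - Real.sqrt y / Real.sqrt x ≤ Real.log (Real.sqrt x / Real.sqrt y) := by
      have := one_sub_inv_le_log (s := Real.sqrt x / Real.sqrt y) (by positivity)
      rw [one_div_div] at this; linarith [this]
    have hlog : Real.log (Real.sqrt x / Real.sqrt y) = (Real.log x - Real.log y)/2 := by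
      rw [Real.log_div (ne_of_gt hsx) (ne_of_gt hsy), Real.log_sqrt hx, Real.log_sqrt hy.le]
      ring
    rw [hlog] at key
    have hmul : x * (1 - Real.sqrt y / Real.sqrt x) ≤ x * ((Real.log x - Real.log y)/2) :=
      mul_le_mul_of_nonneg_left key hx
    have hxs : Real.sqrt x * Real.sqrt x = x := Real.mul_self_sqrt hx
    have hys : Real.sqrt y * Real.sqrt y = y := Real.mul_self_sqrt hy.le
    have h2 : x * (Real.sqrt y / Real.sqrt x) = Real.sqrt x * Real.sqrt y := by
      field_simp; rw [sq, hxs]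
    nlinarith [hmul, h2]

-- AM-GM style L1 pointwise bound
lemma l1_pw {x y ε : ℝ} (hx : 0 ≤ x) (hy : 0 ≤ y) (hε : 0 < ε) :
    |x - y| ≤ (Real.sqrt x - Real.sqrt y)^2 / (2*ε) + ε * (x + y) := by
  have hxs : Real.sqrt x * Real.sqrt x = x := Real.mul_self_sqrt hx
  have hys : Real.sqrt y * Real.sqrt y = y := Real.mul_self_sqrt hy
  set a := Real.sqrt x; set b := Real.sqrt y
  have ha : 0 ≤ a := Real.sqrt_nonneg x
  have hb : 0 ≤ b := Real.sqrt_nonneg y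
  rw [abs_sub_le_iff]
  constructor
  · rw [div_add' _ _ _ (by positivity), le_div_iff₀ (by positivity)]
    nlinarith [sq_nonneg ((a-b) - ε*(a+b)), sq_nonneg ((a-b) + ε*(a+b)), sq_nonneg (a-b), mul_pos hε hε]
  · rw [div_add' _ _ _ (by positivity), le_div_iff₀ (by positivity)]
    nlinarith [sq_nonneg ((a-b) - ε*(a+b)), sq_nonneg ((a-b) + ε*(a+b)), sq_nonneg (a-b), mul_pos hε hε]

-- geometric series over ℕ+
lemma geom_pnat_summable {r : ℝ} (h0 : 0 ≤ r) (h1 : r < 1) :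
    Summable (fun l : ℕ+ => r ^ ((l:ℕ) - 1)) := by
  rw [pnat_summable_iff]
  exact (summable_geometric_of_lt_one h0 h1).congr (by intro n; simp [Nat.succPNat])

lemma geom_pnat_tsum {r : ℝ} (h0 : 0 ≤ r) (h1 : r < 1) :
    ∑' l : ℕ+, r ^ ((l:ℕ) - 1) = (1 - r)⁻¹ := by
  rw [pnat_tsum_eq]
  rw [← tsum_geometric_of_lt_one h0 h1]
  exact tsum_congr (by intro n; simp [Nat.succPNat])

lemma mu_final_bound {μ s : ℝ} (h1 : 1 ≤ μ) (hs0 : 0 ≤ s) (hs : s * s = μ + 1)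
    (h : μ ≤ 8 * s) : μ ≤ 100 := by nlinarith [sq_nonneg (s - 8)]

/-- There exist `d₀ > 0` and `κ' < ∞` such that for every `β > 1/2` and `0 < d < d₀`:
if a pmf `p` on the positive integers has finite mean `μ` and Shannon entropy
(in bits) at least `(1 - d^β)·μ`, then `∑_{l≥1} |p(l) - 2^{-l}| ≤ κ'·d^(β/2)`. -/
theorem stmt_2 :
    ∃ d₀ : ℝ, 0 < d₀ ∧ ∃ κ' : ℝ,
      ∀ β : ℝ, 1 / 2 < β →
        ∀ d : ℝ, 0 < d → d < d₀ →
          ∀ p : ℕ+ → ℝ, (∀ l, 0 ≤ p l) → (∑' l : ℕ+, p l = 1) →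
            (Summable fun l : ℕ+ => (l : ℝ) * p l) →
            (1 - d ^ β) * (∑' l : ℕ+, (l : ℝ) * p l) ≤
                (∑' l : ℕ+, -(p l * Real.logb 2 (p l))) →
              (∑' l : ℕ+, |p l - (2 : ℝ) ^ (-((l : ℕ) : ℤ))|) ≤ κ' * d ^ (β / 2) := by
  refine ⟨1/4, by norm_num, 37, ?_⟩
  intro β hβ d hd hd4 p hp0 hp1 hμsum hH
  set μ := ∑' l : ℕ+, (l : ℝ) * p l with hμdef
  -- basic facts about p
  have hl1 : ∀ l : ℕ+, (1:ℝ) ≤ (l:ℝ) := by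
    intro l; exact_mod_cast l.one_le
  have hplel : ∀ l : ℕ+, p l ≤ (l:ℝ) * p l := by
    intro l; nlinarith [hp0 l, hl1 l]
  have hp_sum : Summable p := Summable.of_nonneg_of_le hp0 hplel hμsum
  have hμ1 : 1 ≤ μ := by
    rw [← hp1]; exact Summable.tsum_le_tsum hplel hp_sum hμsum
  -- bounds on D = d^β
  set D := d ^ β with hDdef
  have hD0 : 0 < D := Real.rpow_pos_of_pos hd β
  have hquart : ((1:ℝ)/4) ^ ((1:ℝ)/2) = 1/2 := by
    rw [show (1/4:ℝ) = (1/2:ℝ)^(2:ℕ) by norm_num, ← Real.rpow_natCast ((1:ℝ)/2) 2,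
      ← Real.rpow_mul (by norm_num)]
    norm_num
  have hDhalf : D ≤ 1/2 := by
    have h1 : d ^ β ≤ d ^ ((1:ℝ)/2) :=
      Real.rpow_le_rpow_of_exponent_ge hd (by linarith) hβ.le
    have h2 : d ^ ((1:ℝ)/2) ≤ ((1:ℝ)/4) ^ ((1:ℝ)/2) :=
      Real.rpow_le_rpow hd.le (by linarith) (by norm_num)
    rw [hquart] at h2; exact h1.trans h2
  have hposμ : 0 < (1 - D) * μ := mul_pos (by linarith) (by linarith)
  -- entropy summable case split
  by_cases hS : Summable (fun l : ℕ+ => -(p l * Real.logb 2 (p l)))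
  swap
  · exfalso
    rw [tsum_eq_zero_of_not_summable hS] at hH
    linarith
  set Hb := ∑' l : ℕ+, -(p l * Real.logb 2 (p l)) with hHbdef
  have hHb : (1 - D) * μ ≤ Hb := hH
  have hHb0 : 0 < Hb := lt_of_lt_of_le hposμ hHb
  have hlog2 : (0.6931471803:ℝ) < Real.log 2 := Real.log_two_gt_d9
  have hlog2' : Real.log 2 < 0.6931471808 := Real.log_two_lt_d9
  -- convert to natural log
  have hlb : ∀ l : ℕ+, -(p l * Real.logb 2 (p l))
      = (-(p l * Real.log (p l))) * (Real.log 2)⁻¹ := by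
    intro l; rw [Real.logb]; ring
  have hSlog : Summable (fun l : ℕ+ => -(p l * Real.log (p l))) := by
    have h := hS.mul_right (Real.log 2)
    apply h.congr
    intro l; rw [hlb l, mul_assoc, inv_mul_cancel₀ (by positivity), mul_one]
  have hSlogp : Summable (fun l : ℕ+ => p l * Real.log (p l)) := by
    have := hSlog.neg; simpa using this
  have hHn : ∑' l : ℕ+, -(p l * Real.log (p l)) = Hb * Real.log 2 := by
    have h1 : Hb = (∑' l : ℕ+, -(p l * Real.log (p l))) * (Real.log 2)⁻¹ := by
      rw [hHbdef, ← tsum_mul_right]; exact tsum_congr hlb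
    rw [h1, mul_assoc, inv_mul_cancel₀ (by positivity), mul_one]
  set Hn := Hb * Real.log 2 with hHndef
  ---- Step A : μ ≤ 100
  have hμ100 : μ ≤ 100 := by
    set ν := μ + 1 with hνdef
    have hν2 : (2:ℝ) ≤ ν := by linarith
    have hν0 : (0:ℝ) < ν := by linarith
    have hμ0 : (0:ℝ) < μ := by linarith
    set r := μ / ν with hrdef
    have hr0 : 0 ≤ r := by positivity
    have hr1 : r < 1 := by rw [hrdef, div_lt_one hν0]; linarith
    set c := Real.log (ν / μ) with hcdef
    have hc0 : 0 ≤ c := Real.log_nonneg (by rw [le_div_iff₀ hμ0]; linarith)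
    set g : ℕ+ → ℝ := fun l => ν⁻¹ * r ^ ((l:ℕ) - 1) with hgdef
    have hg0 : ∀ l, 0 < g l := by
      intro l
      have hr0' : 0 < r := by rw [hrdef]; positivity
      positivity
    have hlogg : ∀ l : ℕ+, Real.log (g l) = -Real.log ν - (((l:ℕ):ℝ) - 1) * c := by
      intro l
      rw [hgdef]
      have hrpos : 0 < r := by rw [hrdef]; positivity
      rw [Real.log_mul (by positivity) (by positivity), Real.log_inv, Real.log_pow]
      have hlr : Real.log r = -c := by
        rw [hrdef, hcdef, Real.log_div (by linarith) (by linarith),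
          Real.log_div (by linarith) (by linarith)]
        ring
      rw [hlr]
      have h1l : 1 ≤ (l:ℕ) := l.one_le
      rw [Nat.cast_sub h1l, Nat.cast_one]
      ring
    set F : ℕ+ → ℝ := fun l =>
      p l * Real.log ν + c * ((l:ℝ) * p l - p l) + (g l - p l) with hFdef
    have hpw : ∀ l, -(p l * Real.log (p l)) ≤ F l := by
      intro l
      have hgb := gibbs_pw (hp0 l) (hg0 l)
      have hll : ((l:ℕ):ℝ) = (l:ℝ) := by norm_cast
      rw [hlogg l, hll] at hgb
      have heq : -(p l * (-Real.log ν - ((l:ℝ) - 1) * c)) + g l - p l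
          = p l * Real.log ν + c * ((l:ℝ) * p l - p l) + (g l - p l) := by ring
      rw [hFdef]
      simp only
      linarith [hgb, heq ▸ hgb]
    have hsum1 : Summable (fun l : ℕ+ => p l * Real.log ν) := hp_sum.mul_right _
    have hsum2 : Summable (fun l : ℕ+ => c * ((l:ℝ) * p l - p l)) :=
      ((hμsum.sub hp_sum).mul_left c)
    have hsumg : Summable g := (geom_pnat_summable hr0 hr1).mul_left _
    have hsum3 : Summable (fun l : ℕ+ => g l - p l) := hsumg.sub hp_sum
    have hF_sum : Summable F := (hsum1.add hsum2).add hsum3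
    have htsumg : ∑' l, g l = 1 := by
      rw [hgdef, tsum_mul_left, geom_pnat_tsum hr0 hr1]
      have h1r : 1 - r = ν⁻¹ := by
        rw [hrdef]; field_simp; rw [hνdef]; ring
      rw [h1r, inv_inv, inv_mul_cancel₀ (by positivity)]
    have htsumF : ∑' l, F l = Real.log ν + c * (μ - 1) := by
      rw [hFdef, Summable.tsum_add (hsum1.add hsum2) hsum3, Summable.tsum_add hsum1 hsum2,
        tsum_mul_right, tsum_mul_left, Summable.tsum_sub hsumg hp_sum,
        Summable.tsum_sub hμsum hp_sum, hp1, htsumg, ← hμdef]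
      ring
    have hHnF : Hn ≤ Real.log ν + c * (μ - 1) := by
      rw [← htsumF, ← hHn]
      exact Summable.tsum_le_tsum hpw hSlog hF_sum
    have hcμ : c ≤ 1/μ := by
      have hlog := Real.log_le_sub_one_of_pos (x := ν/μ) (by positivity)
      have heq : ν/μ - 1 = 1/μ := by
        rw [hνdef, div_sub_one hμ0.ne']
        norm_num
      rw [hcdef]; linarith
    have hcc : c * (μ - 1) ≤ 1 := by
      have h1 : c * (μ - 1) ≤ (1/μ) * (μ - 1) :=
        mul_le_mul_of_nonneg_right hcμ (by linarith)
      have h2 : (1/μ) * (μ - 1) ≤ 1 := by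
        rw [div_mul_eq_mul_div, one_mul, div_le_one hμ0]; linarith
      linarith
    have hHn2 : Hn ≤ Real.log ν + 1 := by linarith
    have hμHb : μ ≤ 2 * Hb := by
      have h1 : μ * (1/2) ≤ μ * (1 - D) :=
        mul_le_mul_of_nonneg_left (by linarith) (by linarith)
      have h2 : μ * (1 - D) = (1 - D) * μ := mul_comm _ _
      linarith
    have hHb2 : Hb ≤ 2 * (Real.log ν + 1) := by
      have h1 : Hb * (1/2) ≤ Hb * Real.log 2 :=
        mul_le_mul_of_nonneg_left (by linarith) hHb0.le
      have h2 : Hb * Real.log 2 = Hn := rfl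
      linarith
    have hlogν : Real.log ν ≤ 2 * (Real.sqrt ν - 1) := by
      have h1 : Real.log (Real.sqrt ν) = Real.log ν / 2 := Real.log_sqrt hν0.le
      have h2 : Real.log (Real.sqrt ν) ≤ Real.sqrt ν - 1 :=
        Real.log_le_sub_one_of_pos (Real.sqrt_pos.2 hν0)
      linarith
    have hs : Real.sqrt ν * Real.sqrt ν = ν := Real.mul_self_sqrt hν0.le
    have hs0 : 0 ≤ Real.sqrt ν := Real.sqrt_nonneg ν
    exact mu_final_bound hμ1 hs0 (by rw [hs]) (by linarith)
  ---- Step B : Hellinger sum bound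
  set q : ℕ+ → ℝ := fun l => ((1:ℝ)/2) ^ (l:ℕ) with hqdef
  have hq0 : ∀ l, 0 < q l := by intro l; rw [hqdef]; positivity
  have hqeq : ∀ l : ℕ+, q l = ((1:ℝ)/2) * ((1:ℝ)/2) ^ ((l:ℕ) - 1) := by
    intro l
    show ((1:ℝ)/2) ^ (l:ℕ) = _
    conv_lhs => rw [show (l:ℕ) = ((l:ℕ) - 1) + 1 from (Nat.sub_add_cancel l.one_le).symm]
    rw [pow_succ]; ring
  have hq_sum : Summable q :=
    ((geom_pnat_summable (by norm_num) (by norm_num : (1:ℝ)/2 < 1)).mul_left ((1:ℝ)/2)).congr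
      (fun l => (hqeq l).symm)
  have hq_tsum : ∑' l, q l = 1 := by
    rw [tsum_congr hqeq, tsum_mul_left, geom_pnat_tsum (by norm_num) (by norm_num)]
    norm_num
  have hlogq : ∀ l : ℕ+, Real.log (q l) = -((l:ℝ) * Real.log 2) := by
    intro l
    rw [hqdef]
    simp only
    rw [Real.log_pow]
    have h12 : Real.log ((1:ℝ)/2) = -Real.log 2 := by
      rw [one_div, Real.log_inv]
    rw [h12]
    have hll : ((l:ℕ):ℝ) = (l:ℝ) := by norm_cast
    rw [hll]; ring
  set KL : ℕ+ → ℝ := fun l =>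
    p l * Real.log (p l) + (l:ℝ) * p l * Real.log 2 - p l + q l with hKLdef
  have hKL_pw : ∀ l, (Real.sqrt (p l) - Real.sqrt (q l))^2 ≤ KL l := by
    intro l
    have hh := hellinger_pw (hp0 l) (hq0 l)
    rw [hlogq l] at hh
    have heq : p l * Real.log (p l) - p l * -((l:ℝ) * Real.log 2) - p l + q l
        = p l * Real.log (p l) + (l:ℝ) * p l * Real.log 2 - p l + q l := by ring
    rw [heq] at hh
    rw [hKLdef]
    exact hh
  have hKL_sum : Summable KL :=
    ((hSlogp.add (hμsum.mul_right (Real.log 2))).sub hp_sum).add hq_sum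
  have htsum_plogp : ∑' l : ℕ+, p l * Real.log (p l) = -Hn := by
    have h2 : ∑' l : ℕ+, -(p l * Real.log (p l)) = -∑' l : ℕ+, p l * Real.log (p l) := by
      rw [tsum_neg]
    rw [h2] at hHn
    linarith
  have htsumKL : ∑' l, KL l = Real.log 2 * (μ - Hb) := by
    rw [hKLdef, Summable.tsum_add ((hSlogp.add (hμsum.mul_right (Real.log 2))).sub hp_sum) hq_sum,
      Summable.tsum_sub (hSlogp.add (hμsum.mul_right (Real.log 2))) hp_sum,
      Summable.tsum_add hSlogp (hμsum.mul_right (Real.log 2)), tsum_mul_right,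
      htsum_plogp, hp1, hq_tsum, ← hμdef, hHndef]
    ring
  have hμHbD : μ - Hb ≤ D * μ := by
    have h : (1 - D) * μ = μ - D * μ := by ring
    linarith [h ▸ hHb]
  have htsumKL_le : ∑' l, KL l ≤ 70 * D := by
    rw [htsumKL]
    have a1 : Real.log 2 * (μ - Hb) ≤ Real.log 2 * (D * μ) :=
      mul_le_mul_of_nonneg_left hμHbD (by positivity)
    have hDμ : D * μ ≤ D * 100 := mul_le_mul_of_nonneg_left hμ100 hD0.le
    have a2 : Real.log 2 * (D * μ) ≤ Real.log 2 * (D * 100) :=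
      mul_le_mul_of_nonneg_left hDμ (by positivity)
    have a3 : Real.log 2 * (D * 100) ≤ 0.7 * (D * 100) :=
      mul_le_mul_of_nonneg_right (by linarith) (by positivity)
    linarith
  set hell : ℕ+ → ℝ := fun l => (Real.sqrt (p l) - Real.sqrt (q l))^2 with helldef
  have hhell_sum : Summable hell :=
    Summable.of_nonneg_of_le (fun l => sq_nonneg _) hKL_pw hKL_sum
  have hhell_le : ∑' l, hell l ≤ 70 * D :=
    le_trans (Summable.tsum_le_tsum hKL_pw hhell_sum hKL_sum) htsumKL_le
  ---- Step C : conclude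
  set ε := d ^ (β/2) with hεdef
  have hε0 : 0 < ε := Real.rpow_pos_of_pos hd _
  have hε2 : ε^2 = D := by
    rw [hεdef, hDdef, ← Real.rpow_natCast (d ^ (β/2)) 2, ← Real.rpow_mul hd.le]
    norm_num
  set G : ℕ+ → ℝ := fun l => hell l / (2*ε) + ε * (p l + q l) with hGdef
  have hG_pw : ∀ l, |p l - q l| ≤ G l := fun l => l1_pw (hp0 l) (hq0 l).le hε0
  have hG_sum : Summable G :=
    (hhell_sum.div_const _).add ((hp_sum.add hq_sum).mul_left ε)
  have habs_sum : Summable (fun l : ℕ+ => |p l - q l|) :=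
    Summable.of_nonneg_of_le (fun l => abs_nonneg _) hG_pw hG_sum
  have htsumG : ∑' l, G l = (∑' l, hell l) / (2*ε) + ε * 2 := by
    rw [hGdef, Summable.tsum_add (hhell_sum.div_const _) ((hp_sum.add hq_sum).mul_left ε),
      tsum_div_const, tsum_mul_left, Summable.tsum_add hp_sum hq_sum, hp1, hq_tsum]
    norm_num
  have hmain : ∑' l, |p l - q l| ≤ 37 * ε := by
    have h1 : ∑' l, |p l - q l| ≤ ∑' l, G l := Summable.tsum_le_tsum hG_pw habs_sum hG_sum
    rw [htsumG] at h1
    have h2 : (∑' l, hell l) / (2*ε) ≤ 70 * D / (2*ε) := by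
      gcongr
    have h3 : 70 * D / (2*ε) = 35 * ε := by
      rw [← hε2]; field_simp; ring
    linarith
  have hrw : (∑' l : ℕ+, |p l - (2 : ℝ) ^ (-((l : ℕ) : ℤ))|) = ∑' l, |p l - q l| := by
    apply tsum_congr
    intro l
    rw [hqdef]
    simp [zpow_neg, one_div, inv_pow]
  rw [hrw]
  linarith
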